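/- For the homogeneous cubic map H = (0, 0, x₁³, x₁²x₂, x₁x₂², x₃x₂² − 2x₄x₁x₂ + x₅x₁²) in dimension 6 over ℚ, the Jacobian JH satisfies (JH)² = 0, but (JH)|_{x=y}·(JH)|_{x=z} ≠ 0 for fresh indeterminate 6-tuples y, z, and (JH)|_{x=w}·(JH)|_{x=y}·(JH)|_{x=z} = 0; i.e., JH has nilpotency index 2 and strong nilpotency index 3. -/
import Mathlib


open MvPolynomial

/-- Substitute the `i`-th fresh tuple of indeterminates for `x` in every entry of `M`. -/
noncomputable def substN {K : Type} [CommRing K] {n m : ℕ}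
    (M : Matrix (Fin m) (Fin m) (MvPolynomial (Fin n) K)) (i : ℕ) :
    Matrix (Fin m) (Fin m) (MvPolynomial (ℕ × Fin n) K) :=
  M.map (rename fun k => (i, k))

/-- The Jacobian matrix `(∂H_i/∂x_j)` of a polynomial map `H`. -/
noncomputable def jac {K : Type} [CommRing K] {n : ℕ}
    (H : Fin n → MvPolynomial (Fin n) K) :
    Matrix (Fin n) (Fin n) (MvPolynomial (Fin n) K) :=
  Matrix.of fun i j => pderiv j (H i)

/-- The homogeneous cubic map
`H = (0, 0, x₁³, x₁²x₂, x₁x₂², x₃x₂² − 2x₄x₁x₂ + x₅x₁²)` in dimension 6 over ℚ. -/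
noncomputable def H9 : Fin 6 → MvPolynomial (Fin 6) ℚ :=
  ![0, 0, X 0 ^ 3, X 0 ^ 2 * X 1, X 0 * X 1 ^ 2,
    X 2 * X 1 ^ 2 - 2 * X 3 * X 0 * X 1 + X 4 * X 0 ^ 2]

noncomputable def Jmat : Matrix (Fin 6) (Fin 6) (MvPolynomial (Fin 6) ℚ) :=
  !![0,0,0,0,0,0;
     0,0,0,0,0,0;
     3*X 0^2,0,0,0,0,0;
     2*X 0*X 1, X 0^2,0,0,0,0;
     X 1^2, 2*X 0*X 1,0,0,0,0;
     -2*X 3*X 1 + 2*X 4*X 0, 2*X 2*X 1 - 2*X 3*X 0, X 1^2, -2*X 0*X 1, X 0^2, 0]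

lemma cons_val_five {α : Type*} (a₀ a₁ a₂ a₃ a₄ a₅ : α) : ![a₀,a₁,a₂,a₃,a₄,a₅] 5 = a₅ := rfl


lemma cons_val_five' {α : Type*} {n : ℕ} (a : α) (u : Fin (n+5) → α) :
    Matrix.vecCons a u 5 =
      Matrix.vecHead (Matrix.vecTail (Matrix.vecTail (Matrix.vecTail (Matrix.vecTail u)))) := rfl

lemma pderiv_two (j : Fin 6) : pderiv j (2 : MvPolynomial (Fin 6) ℚ) = 0 := by
  have h : (C 2 : MvPolynomial (Fin 6) ℚ) = 2 := map_ofNat C 2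
  rw [← h, pderiv_C]

lemma jac_eq : jac H9 = Jmat := by
  ext i j
  fin_cases i <;> fin_cases j <;>
    simp [jac, H9, Jmat, pderiv_X, Pi.single_apply, Matrix.cons_val_succ, cons_val_five, Matrix.vecHead, Matrix.vecTail, cons_val_five', pderiv_two] <;> ring

example : True := trivial

set_option maxHeartbeats 1000000

noncomputable def Pmat : Matrix (Fin 6) (Fin 6) (MvPolynomial (ℕ × Fin 6) ℚ) :=
  !![0,0,0,0,0,0;
     0,0,0,0,0,0;
     0,0,0,0,0,0;
     0,0,0,0,0,0;
     0,0,0,0,0,0;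
     3*X (1,1)^2*X (0,0)^2 - 4*X (1,0)*X (1,1)*X (0,0)*X (0,1) + X (1,0)^2*X (0,1)^2,
       -2*X (1,0)*X (1,1)*X (0,0)^2 + 2*X (1,0)^2*X (0,0)*X (0,1), 0, 0, 0, 0]

lemma prod_eq : substN Jmat 1 * substN Jmat 0 = Pmat := by
  ext i j : 1
  fin_cases i <;> fin_cases j <;>
    simp [substN, Jmat, Pmat, Matrix.mul_apply, Fin.sum_univ_six, Matrix.map_apply,
      Matrix.vecHead, Matrix.vecTail, cons_val_five', Matrix.cons_val_succ, map_ofNat] <;> ring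

theorem stmt9 :
    jac H9 * jac H9 = 0 ∧
    substN (jac H9) 1 * substN (jac H9) 0 ≠ 0 ∧
    substN (jac H9) 2 * substN (jac H9) 1 * substN (jac H9) 0 = 0 := by
  rw [jac_eq]
  refine ⟨?_, ?_, ?_⟩
  · ext i j : 1
    fin_cases i <;> fin_cases j <;>
      simp [Jmat, Matrix.mul_apply, Fin.sum_univ_six, Matrix.vecHead, Matrix.vecTail,
        cons_val_five', Matrix.cons_val_succ, map_ofNat] <;> ring
  · rw [prod_eq]
    intro h
    have h50 := congrFun (congrFun h 5) 0
    have := congrArg (aeval (fun p : ℕ × Fin 6 =>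
      if p = (1, 1) then (1 : ℚ) else if p = (0, 0) then 1 else 0)) h50
    simp [Pmat, Matrix.vecHead, Matrix.vecTail, cons_val_five', Matrix.cons_val_succ,
      Prod.ext_iff] at this
  · rw [mul_assoc, prod_eq]
    ext i j : 1
    fin_cases i <;> fin_cases j <;>
      simp [substN, Jmat, Pmat, Matrix.mul_apply, Fin.sum_univ_six, Matrix.map_apply,
        Matrix.vecHead, Matrix.vecTail, cons_val_five', Matrix.cons_val_succ, map_ofNat]
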